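/- Let Λ_n be a convex n-gon inscribed in a circle of radius R, with half central angles θ_1,…,θ_n ∈ (0,π/2) summing to π, perimeter L_n = 2R ∑ sin θ_i and area A_n = R² ∑ sin θ_i cos θ_i. Let A_n* = nR² sin(π/n) cos(π/n) be the area of the regular inscribed n-gon and d_n = n tan(π/n). Then L_n² − 4 d_n A_n ≥ (1/R²) (A_n* − A_n)², with equality if and only if Λ_n is regular (θ_1 = ⋯ = θ_n = π/n). -/

import Mathlib

open Real

private lemma gDeriv (b x : ℝ) :
    HasDerivAt (fun y => 2 * b * Real.sin y - Real.sin y * Real.cos y - y)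
      (2 * Real.cos x * (b - Real.cos x)) x := by
  have h := (((Real.hasDerivAt_sin x).const_mul (2*b)).sub
      ((Real.hasDerivAt_sin x).mul (Real.hasDerivAt_cos x))).sub (hasDerivAt_id x)
  refine h.congr_deriv ?_
  linear_combination Real.sin_sq_add_cos_sq x

private lemma g_lt (α t : ℝ) (hα : α ∈ Set.Ioo 0 (π/2)) (ht : t ∈ Set.Ioo 0 (π/2))
    (hne : t ≠ α) :
    2*Real.cos α*Real.sin α - Real.sin α*Real.cos α - α
      < 2*Real.cos α*Real.sin t - Real.sin t*Real.cos t - t := by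
  set g : ℝ → ℝ := fun y => 2 * Real.cos α * Real.sin y - Real.sin y * Real.cos y - y with hg
  have hcont : Continuous g := by fun_prop
  rcases lt_or_gt_of_ne hne with h | h
  · -- t < α : g strictly anti on [0, α]
    have anti : StrictAntiOn g (Set.Icc 0 α) := by
      apply strictAntiOn_of_deriv_neg (convex_Icc _ _) hcont.continuousOn
      intro x hx
      rw [interior_Icc] at hx
      rw [(gDeriv (Real.cos α) x).deriv]
      have hx1 : 0 < Real.cos x := Real.cos_pos_of_mem_Ioo ⟨by linarith [hx.1, pi_pos], by linarith [hx.2, hα.2]⟩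
      have hx2 : Real.cos α < Real.cos x :=
        Real.cos_lt_cos_of_nonneg_of_le_pi hx.1.le (by linarith [hα.2, pi_pos]) hx.2
      nlinarith
    exact anti ⟨ht.1.le, h.le⟩ ⟨hα.1.le, le_refl _⟩ h
  · -- α < t : g strictly mono on [α, π/2]
    have mono : StrictMonoOn g (Set.Icc α (π/2)) := by
      apply strictMonoOn_of_deriv_pos (convex_Icc _ _) hcont.continuousOn
      intro x hx
      rw [interior_Icc] at hx
      rw [(gDeriv (Real.cos α) x).deriv]
      have hx1 : 0 < Real.cos x := Real.cos_pos_of_mem_Ioo ⟨by linarith [hx.1, hα.1, pi_pos], hx.2⟩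
      have hx2 : Real.cos x < Real.cos α :=
        Real.cos_lt_cos_of_nonneg_of_le_pi hα.1.le (by linarith [hx.2, pi_pos]) hx.1
      nlinarith
    exact mono ⟨le_refl _, hα.2.le⟩ ⟨h.le, ht.2.le⟩ h

private lemma g_le (α t : ℝ) (hα : α ∈ Set.Ioo 0 (π/2)) (ht : t ∈ Set.Ioo 0 (π/2)) :
    2*Real.cos α*Real.sin α - Real.sin α*Real.cos α - α
      ≤ 2*Real.cos α*Real.sin t - Real.sin t*Real.cos t - t := by
  rcases eq_or_ne t α with h | h
  · subst h; exact le_refl _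
  · exact (g_lt α t hα ht h).le

private lemma core_id (n t a b S q : ℝ) (hab : a^2 + b^2 = 1) (ht : t * b = a) :
    b^2*(4*S^2 - 4*n*t*q - (n*a*b - q)^2)
      = (2*b*S - q - n*(a*b))*(2*b*S + q + n*(a*b)) + (a*(q - n*a*b))^2 := by
  linear_combination (-4*n*q*b)*ht + (-(q - n*a*b)^2)*hab

private lemma core_ineq (n t a b S q : ℝ) (hb : 0 < b) (hab : a^2 + b^2 = 1)
    (ht : t * b = a) (hq : 0 < q) (hnab : 0 ≤ n*(a*b))
    (key : q + n*(a*b) ≤ 2*b*S) :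
    (n*a*b - q)^2 ≤ 4*S^2 - 4*n*t*q := by
  have hid := core_id n t a b S q hab ht
  have h1 : 0 ≤ 2*b*S - q - n*(a*b) := by linarith
  have h2 : 0 ≤ 2*b*S + q + n*(a*b) := by linarith
  nlinarith [mul_nonneg h1 h2, sq_nonneg (a*(q - n*a*b)), mul_pos hb hb]

private lemma core_eq (n t a b S q : ℝ) (hb : 0 < b) (hab : a^2 + b^2 = 1)
    (ht : t * b = a) (hq : 0 < q) (hnab : 0 ≤ n*(a*b))
    (key : q + n*(a*b) ≤ 2*b*S)
    (heq : 4*S^2 - 4*n*t*q = (n*a*b - q)^2) :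
    2*b*S = q + n*(a*b) := by
  have hid := core_id n t a b S q hab ht
  rw [heq] at hid
  have h2 : 0 < 2*b*S + q + n*(a*b) := by linarith
  have h1 : 2*b*S - q - n*(a*b) ≤ 0 := by
    nlinarith [sq_nonneg (a*(q - n*a*b))]
  linarith

open Real in
theorem stmt17 (n : ℕ) (hn : 3 ≤ n) (R : ℝ) (hR : 0 < R)
    (θ : Fin n → ℝ) (hθ : ∀ i, θ i ∈ Set.Ioo (0:ℝ) (π / 2))
    (hsum : ∑ i, θ i = π)
    (L A Astar d : ℝ)
    (hL : L = 2 * R * ∑ i, sin (θ i))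
    (hA : A = R ^ 2 * ∑ i, sin (θ i) * cos (θ i))
    (hAstar : Astar = (n : ℝ) * R ^ 2 * sin (π / n) * cos (π / n))
    (hd : d = (n : ℝ) * tan (π / n)) :
    (1 / R ^ 2) * (Astar - A) ^ 2 ≤ L ^ 2 - 4 * d * A
    ∧ (L ^ 2 - 4 * d * A = (1 / R ^ 2) * (Astar - A) ^ 2
      ↔ ∀ i, θ i = π / n) := by
  have hπ : 0 < π := pi_pos
  have hn0 : (0:ℝ) < (n:ℝ) := by exact_mod_cast Nat.lt_of_lt_of_le (by norm_num) hn
  have hn3 : (3:ℝ) ≤ (n:ℝ) := by exact_mod_cast hn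
  set α : ℝ := π / (n:ℝ) with hαdef
  have hα0 : 0 < α := by positivity
  have hα2 : α < π / 2 := by
    rw [hαdef, div_lt_div_iff₀ hn0 (by norm_num)]
    nlinarith
  have hαmem : α ∈ Set.Ioo 0 (π/2) := ⟨hα0, hα2⟩
  set a : ℝ := Real.sin α with hadef
  set b : ℝ := Real.cos α with hbdef
  have ha : 0 < a := Real.sin_pos_of_pos_of_lt_pi hα0 (by linarith)
  have hb : 0 < b := Real.cos_pos_of_mem_Ioo ⟨by linarith, hα2⟩
  have hab : a^2 + b^2 = 1 := Real.sin_sq_add_cos_sq α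
  set S : ℝ := ∑ i, Real.sin (θ i) with hSdef
  set q : ℝ := ∑ i, Real.sin (θ i) * Real.cos (θ i) with hqdef
  have hne : (Finset.univ : Finset (Fin n)).Nonempty := by
    rw [Finset.univ_nonempty_iff]
    exact Fin.pos_iff_nonempty.mp (by omega)
  have hq : 0 < q := by
    apply Finset.sum_pos _ hne
    intro i _
    have h := hθ i
    exact mul_pos (Real.sin_pos_of_pos_of_lt_pi h.1 (by linarith [h.2]))
      (Real.cos_pos_of_mem_Ioo ⟨by linarith [h.1], h.2⟩)
  have hnα : (n:ℝ) * α = π := by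
    rw [hαdef]; field_simp
  have htan : Real.tan α * b = a := by
    rw [Real.tan_eq_sin_div_cos, hbdef, hadef, div_mul_cancel₀]
    exact ne_of_gt hb
  have hnab : 0 ≤ (n:ℝ)*(a*b) := by positivity
  -- key inequality from tangent line trick
  have hsumineq := Finset.sum_le_sum (fun i (_ : i ∈ Finset.univ) => g_le α (θ i) hαmem (hθ i))
  have hsplit : ∑ i, (2*Real.cos α*Real.sin (θ i) - Real.sin (θ i)*Real.cos (θ i) - θ i)
      = 2*b*S - q - π := by
    rw [hSdef, hqdef, ← hsum]
    rw [Finset.sum_sub_distrib, Finset.sum_sub_distrib, Finset.mul_sum]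
  have hconst : ∑ (_ : Fin n), (2*Real.cos α*Real.sin α - Real.sin α*Real.cos α - α)
      = (n:ℝ)*(a*b) - π := by
    rw [Finset.sum_const, Finset.card_univ, Fintype.card_fin, nsmul_eq_mul]
    rw [← hnα, ← hadef, ← hbdef]; ring
  rw [hsplit, hconst] at hsumineq
  have key : q + (n:ℝ)*(a*b) ≤ 2*b*S := by linarith
  -- rewrite the statement quantities
  have hd' : d = (n:ℝ) * Real.tan α := by rw [hd, hαdef]
  have hLHS : L ^ 2 - 4 * d * A = R^2 * (4*S^2 - 4*(n:ℝ)*(Real.tan α)*q) := by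
    rw [hL, hA, hd']; ring
  have hRHS : (1 / R ^ 2) * (Astar - A) ^ 2 = R^2 * (((n:ℝ)*a*b - q)^2) := by
    rw [hAstar, hA]
    field_simp
  constructor
  · rw [hLHS, hRHS]
    have := core_ineq (n:ℝ) (Real.tan α) a b S q hb hab htan hq hnab key
    nlinarith [sq_nonneg R]
  · constructor
    · -- equality → regular
      intro h
      rw [hLHS, hRHS] at h
      have hR2 : (R:ℝ)^2 ≠ 0 := by positivity
      have heq : 4*S^2 - 4*(n:ℝ)*(Real.tan α)*q = ((n:ℝ)*a*b - q)^2 :=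
        mul_left_cancel₀ hR2 h
      have hSq := core_eq (n:ℝ) (Real.tan α) a b S q hb hab htan hq hnab key heq
      -- sum equality ⇒ pointwise equality
      have hsums : ∑ (_ : Fin n), (2*Real.cos α*Real.sin α - Real.sin α*Real.cos α - α)
          = ∑ i, (2*Real.cos α*Real.sin (θ i) - Real.sin (θ i)*Real.cos (θ i) - θ i) := by
        rw [hsplit, hconst]; linarith
      have hpt := (Finset.sum_eq_sum_iff_of_le
        (fun i (_ : i ∈ Finset.univ) => g_le α (θ i) hαmem (hθ i))).mp hsums
      intro i
      by_contra hne'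
      have := g_lt α (θ i) hαmem (hθ i) hne'
      have := hpt i (Finset.mem_univ i)
      linarith
    · -- regular → equality
      intro h
      have hS : S = (n:ℝ) * a := by
        rw [hSdef]
        simp only [h, ← hadef]
        rw [Finset.sum_const, Finset.card_univ, Fintype.card_fin, nsmul_eq_mul]
      have hq' : q = (n:ℝ) * (a*b) := by
        rw [hqdef]
        simp only [h, ← hadef, ← hbdef]
        rw [Finset.sum_const, Finset.card_univ, Fintype.card_fin, nsmul_eq_mul]
      rw [hLHS, hRHS, hS, hq']
      linear_combination (-4*(n:ℝ)^2*a*R^2) * htan
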